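/- Fix m ≥ 1 and identify ℂ^(2^m) with functions (Fin m → ZMod 2) → ℂ. For k < m let X(k) be the unitary permutation matrix sending the standard basis vector e_x to e_{x'} where x' agrees with x except x'_k = x_k + 1, and let Z(k) be the diagonal unitary with entry (−1)^{x_k} at basis vector x. Let P_m be the subgroup of the unitary group U(2^m) generated by the scalar matrix i•1 together with all X(k) and Z(k), and let C_m be the normalizer of P_m in U(2^m). Then for all C₁, C₂ ∈ C_m, the following are equivalent: (a) there exist a complex number ω with |ω| = 1 and P ∈ P_m such that C₁ = ω • (P * C₂); (b) for every Q ∈ P_m there exists α ∈ {1, −1, i, −i} such that C₁ * Q * C₁⁻¹ = α • (C₂ * Q * C₂⁻¹). -/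

import Mathlib

namespace Stmt3

/-- Basis labels for `m` qubits: `ℂ^(2^m)` is identified with functions
`(Fin m → ZMod 2) → ℂ`. -/
abbrev QB (m : ℕ) := Fin m → ZMod 2

/-- The Pauli `X` gate on qubit `k`: the permutation matrix flipping the `k`-th bit. -/
noncomputable def Xgate {m : ℕ} (k : Fin m) : Matrix (QB m) (QB m) ℂ :=
  fun a b => if a = Function.update b k (b k + 1) then 1 else 0

/-- The Pauli `Z` gate on qubit `k`: the diagonal matrix with entry `(−1)^(x k)`. -/
noncomputable def Zgate {m : ℕ} (k : Fin m) : Matrix (QB m) (QB m) ℂ :=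
  fun a b => if a = b then (-1 : ℂ) ^ ((a k).val) else 0

/-- The `m`-qubit Pauli group: the subgroup of `U(2^m)` generated by `i•1` together with
all `X(k)` and `Z(k)`. -/
noncomputable def pauliGroup (m : ℕ) : Subgroup (Matrix.unitaryGroup (QB m) ℂ) :=
  Subgroup.closure {u |
    (u : Matrix (QB m) (QB m) ℂ) = Complex.I • 1 ∨
    ∃ k : Fin m, (u : Matrix (QB m) (QB m) ℂ) = Xgate k ∨
      (u : Matrix (QB m) (QB m) ℂ) = Zgate k}

/-- The `m`-qubit Clifford group: the normalizer of the Pauli group in `U(2^m)`. -/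
noncomputable def cliffordGroup (m : ℕ) : Subgroup (Matrix.unitaryGroup (QB m) ℂ) :=
  Subgroup.normalizer (pauliGroup m : Set (Matrix.unitaryGroup (QB m) ℂ))

variable {m : ℕ}

def flip (k : Fin m) (x : QB m) : QB m := Function.update x k (x k + 1)

lemma flip_apply_ne {k j : Fin m} (h : j ≠ k) (x : QB m) : flip k x j = x j := by
  simp [flip, Function.update, h]

lemma flip_apply_self (k : Fin m) (x : QB m) : flip k x k = x k + 1 := by
  simp [flip]

lemma zmod2_cases : ∀ z : ZMod 2, z = 0 ∨ z = 1 := by decide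

lemma zmod2_add_one_add_one (a : ZMod 2) : a + 1 + 1 = a := by
  have h : (1 : ZMod 2) + 1 = 0 := rfl
  rw [add_assoc, h, add_zero]

lemma flip_flip (k : Fin m) (x : QB m) : flip k (flip k x) = x := by
  funext j
  by_cases h : j = k
  · subst h; rw [flip_apply_self, flip_apply_self, zmod2_add_one_add_one]
  · rw [flip_apply_ne h, flip_apply_ne h]

lemma Xgate_apply (k : Fin m) (a b : QB m) : Xgate k a b = if a = flip k b then 1 else 0 := rfl

lemma flip_eq_iff (k : Fin m) (a b : QB m) : a = flip k b ↔ b = flip k a := by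
  constructor <;> intro h <;> subst h <;> rw [flip_flip]

lemma Xgate_mul_Xgate (k : Fin m) : Xgate k * Xgate k = 1 := by
  ext a b
  simp only [Matrix.mul_apply, Xgate_apply, Matrix.one_apply]
  rw [Finset.sum_eq_single (flip k b)]
  · simp [flip_flip]
  · intro c _ hc; simp [hc]
  · simp

lemma Zgate_apply (k : Fin m) (a b : QB m) :
    Zgate k a b = if a = b then (-1 : ℂ) ^ ((a k).val) else 0 := rfl

lemma Zgate_mul_Zgate (k : Fin m) : Zgate k * Zgate k = 1 := by
  ext a b
  simp only [Matrix.mul_apply, Zgate_apply, Matrix.one_apply]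
  rw [Finset.sum_eq_single a]
  · by_cases h : a = b
    · simp only [h, if_pos rfl, ← pow_add]
      simp only [if_true, ← pow_add]
      exact (Even.neg_one_pow (⟨(b k).val, rfl⟩ : Even ((b k).val + (b k).val)))
    · simp [h]
  · intro c _ hc; simp [Ne.symm hc]
  · simp

lemma star_Xgate (k : Fin m) : star (Xgate k) = Xgate k := by
  ext a b
  simp only [Matrix.star_apply, Xgate_apply]
  by_cases h : b = flip k a
  · rw [if_pos h, if_pos ((flip_eq_iff k a b).mpr h)]; exact star_one ℂ
  · rw [if_neg h, if_neg (fun hh => h ((flip_eq_iff k a b).mp hh))]; exact star_zero ℂ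

lemma star_Zgate (k : Fin m) : star (Zgate k) = Zgate k := by
  ext a b
  simp only [Matrix.star_apply, Zgate_apply]
  by_cases h : a = b
  · subst h; simp
  · simp [h, Ne.symm h]

lemma Xgate_mem_unitary (k : Fin m) : Xgate k ∈ Matrix.unitaryGroup (QB m) ℂ := by
  rw [Matrix.mem_unitaryGroup_iff, star_Xgate, Xgate_mul_Xgate]

lemma Zgate_mem_unitary (k : Fin m) : Zgate k ∈ Matrix.unitaryGroup (QB m) ℂ := by
  rw [Matrix.mem_unitaryGroup_iff, star_Zgate, Zgate_mul_Zgate]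

noncomputable def uX (k : Fin m) : Matrix.unitaryGroup (QB m) ℂ := ⟨Xgate k, Xgate_mem_unitary k⟩
noncomputable def uZ (k : Fin m) : Matrix.unitaryGroup (QB m) ℂ := ⟨Zgate k, Zgate_mem_unitary k⟩

-- commutation relations
lemma Xgate_mul_Xgate_comm (j k : Fin m) : Xgate j * Xgate k = Xgate k * Xgate j := by
  have key : ∀ x : QB m, flip j (flip k x) = flip k (flip j x) := by
    intro x
    by_cases h : j = k
    · subst h; rfl
    · funext i
      by_cases hij : i = j
      · subst hij
        rw [flip_apply_self, flip_apply_ne h, flip_apply_ne (Ne.symm (h ∘ Eq.symm ∘ id)), flip_apply_self]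
      · by_cases hik : i = k
        · subst hik
          rw [flip_apply_ne (fun hh => h hh.symm), flip_apply_self, flip_apply_self, flip_apply_ne (fun hh => h hh.symm)]
        · rw [flip_apply_ne hij, flip_apply_ne hik, flip_apply_ne hik, flip_apply_ne hij]
  ext a b
  simp only [Matrix.mul_apply, Xgate_apply]
  rw [Finset.sum_eq_single (flip k b), Finset.sum_eq_single (flip j b)]
  · simp [key]
  · intro c _ hc; simp [hc]
  · simp
  · intro c _ hc; simp [hc]
  · simp

lemma Zgate_mul_Zgate_comm (j k : Fin m) : Zgate j * Zgate k = Zgate k * Zgate j := by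
  ext a b
  simp only [Matrix.mul_apply, Zgate_apply]
  rw [Finset.sum_eq_single a, Finset.sum_eq_single a]
  · by_cases h : a = b
    · subst h; simp [mul_comm]
    · simp [h]
  · intro c _ hc; simp [Ne.symm hc]
  · simp
  · intro c _ hc; simp [Ne.symm hc]
  · simp

lemma Xgate_mul_Zgate (j k : Fin m) (a b : QB m) :
    (Xgate j * Zgate k) a b = if a = flip j b then (-1 : ℂ) ^ ((b k).val) else 0 := by
  simp only [Matrix.mul_apply, Xgate_apply, Zgate_apply]
  rw [Finset.sum_eq_single b]
  · by_cases h : a = flip j b <;> simp [h]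
  · intro c _ hc; simp [hc]
  · simp

lemma Zgate_mul_Xgate (j k : Fin m) (a b : QB m) :
    (Zgate k * Xgate j) a b = if a = flip j b then (-1 : ℂ) ^ ((a k).val) else 0 := by
  simp only [Matrix.mul_apply, Xgate_apply, Zgate_apply]
  rw [Finset.sum_eq_single a]
  · by_cases h : a = flip j b <;> simp [h]
  · intro c _ hc; simp [Ne.symm hc]
  · simp

lemma Xgate_Zgate_comm_ne (j k : Fin m) (h : j ≠ k) :
    Xgate j * Zgate k = Zgate k * Xgate j := by
  ext a b
  rw [Xgate_mul_Zgate, Zgate_mul_Xgate]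
  by_cases hab : a = flip j b
  · subst hab
    rw [if_pos rfl, if_pos rfl, flip_apply_ne (Ne.symm h)]
  · simp [hab]

lemma Xgate_Zgate_anticomm (k : Fin m) :
    Xgate k * Zgate k = -(Zgate k * Xgate k) := by
  ext a b
  rw [Xgate_mul_Zgate, Matrix.neg_apply, Zgate_mul_Xgate]
  by_cases hab : a = flip k b
  · subst hab
    rw [if_pos rfl, if_pos rfl, flip_apply_self]
    have : b k = 0 ∨ b k = 1 := by
      rcases b k with ⟨v, hv⟩
      interval_cases v
      · exact Or.inl rfl
      · exact Or.inr rfl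
    have e1 : ZMod.val ((0 : ZMod 2) + 1) = 1 := rfl
    have e2 : ZMod.val ((1 : ZMod 2) + 1) = 0 := rfl
    have e3 : ZMod.val (0 : ZMod 2) = 0 := rfl
    have e4 : ZMod.val (1 : ZMod 2) = 1 := rfl
    rcases this with h | h <;> rw [h] <;> simp [e1, e2, e3, e4]
  · simp [hab]

lemma uX_mem (k : Fin m) : uX k ∈ pauliGroup m :=
  Subgroup.subset_closure (Or.inr ⟨k, Or.inl rfl⟩)

lemma uZ_mem (k : Fin m) : uZ k ∈ pauliGroup m :=
  Subgroup.subset_closure (Or.inr ⟨k, Or.inr rfl⟩)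

/-- Two matrices commute up to sign. -/
def MComm (A B : Matrix (QB m) (QB m) ℂ) : Prop :=
  ∃ ε : ℂ, (ε = 1 ∨ ε = -1) ∧ A * B = ε • (B * A)

lemma MComm.symm {A B : Matrix (QB m) (QB m) ℂ} (h : MComm A B) : MComm B A := by
  obtain ⟨ε, hε, h⟩ := h
  refine ⟨ε, hε, ?_⟩
  rw [h, smul_smul]
  have : ε * ε = 1 := by rcases hε with h' | h' <;> rw [h'] <;> ring
  rw [this, one_smul]

lemma MComm_one_left {B : Matrix (QB m) (QB m) ℂ} : MComm 1 B :=
  ⟨1, Or.inl rfl, by rw [one_mul, mul_one, one_smul]⟩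

lemma MComm_mul_left {A B C : Matrix (QB m) (QB m) ℂ} (h₁ : MComm A C) (h₂ : MComm B C) :
    MComm (A * B) C := by
  obtain ⟨ε₁, hε₁, h₁⟩ := h₁
  obtain ⟨ε₂, hε₂, h₂⟩ := h₂
  refine ⟨ε₁ * ε₂, ?_, ?_⟩
  · rcases hε₁ with h | h <;> rcases hε₂ with h' | h' <;> rw [h, h'] <;> norm_num
  · calc A * B * C = A * (B * C) := by rw [mul_assoc]
    _ = A * (ε₂ • (C * B)) := by rw [h₂]
    _ = ε₂ • (A * C * B) := by rw [Matrix.mul_smul, mul_assoc]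
    _ = ε₂ • ((ε₁ • (C * A)) * B) := by rw [h₁]
    _ = (ε₁ * ε₂) • (C * (A * B)) := by
        rw [Matrix.smul_mul, smul_smul, mul_assoc, mul_comm ε₂ ε₁]

lemma MComm_inv_left {A B : Matrix (QB m) (QB m) ℂ} (hA : A ∈ Matrix.unitaryGroup (QB m) ℂ)
    (h : MComm A B) : MComm (star A) B := by
  obtain ⟨ε, hε, h⟩ := h
  have h1 : star A * A = 1 := hA.1
  have h2 : A * star A = 1 := hA.2
  refine ⟨ε, hε, ?_⟩
  have key : B * star A = ε • (star A * B) := by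
    calc B * star A = star A * (A * B) * star A := by
          rw [← mul_assoc, h1, one_mul]
    _ = star A * (ε • (B * A)) * star A := by rw [h]
    _ = ε • (star A * B * (A * star A)) := by
          rw [Matrix.mul_smul, Matrix.smul_mul, mul_assoc, mul_assoc, mul_assoc]
    _ = ε • (star A * B) := by rw [h2, mul_one]
  have hee : ε * ε = 1 := by rcases hε with h' | h' <;> rw [h'] <;> ring
  rw [key, smul_smul, hee, one_smul]

lemma MComm_gen_gen {u v : Matrix.unitaryGroup (QB m) ℂ}
    (hu : (u : Matrix (QB m) (QB m) ℂ) = Complex.I • 1 ∨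
      ∃ k : Fin m, (u : Matrix (QB m) (QB m) ℂ) = Xgate k ∨
        (u : Matrix (QB m) (QB m) ℂ) = Zgate k)
    (hv : (v : Matrix (QB m) (QB m) ℂ) = Complex.I • 1 ∨
      ∃ k : Fin m, (v : Matrix (QB m) (QB m) ℂ) = Xgate k ∨
        (v : Matrix (QB m) (QB m) ℂ) = Zgate k) :
    MComm (u : Matrix (QB m) (QB m) ℂ) (v : Matrix (QB m) (QB m) ℂ) := by
  have scal : ∀ M : Matrix (QB m) (QB m) ℂ, MComm (Complex.I • 1) M := by
    intro M
    exact ⟨1, Or.inl rfl, by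
      rw [one_smul, Matrix.smul_mul, Matrix.mul_smul, one_mul, mul_one]⟩
  rcases hu with hu | ⟨j, hu | hu⟩
  · rw [hu]; exact scal _
  all_goals rcases hv with hv | ⟨k, hv | hv⟩
  · rw [hv]; exact (scal _).symm
  · rw [hu, hv]; exact ⟨1, Or.inl rfl, by rw [one_smul, Xgate_mul_Xgate_comm]⟩
  · rw [hu, hv]
    by_cases hjk : j = k
    · subst hjk
      exact ⟨-1, Or.inr rfl, by rw [neg_smul, one_smul, Xgate_Zgate_anticomm]⟩
    · exact ⟨1, Or.inl rfl, by rw [one_smul, Xgate_Zgate_comm_ne j k hjk]⟩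
  · rw [hv]; exact (scal _).symm
  · rw [hu, hv]
    by_cases hjk : k = j
    · subst hjk
      exact ⟨-1, Or.inr rfl, by
        rw [neg_smul, one_smul, Xgate_Zgate_anticomm, neg_neg]⟩
    · exact ⟨1, Or.inl rfl, by rw [one_smul, (Xgate_Zgate_comm_ne k j hjk).symm]⟩
  · rw [hu, hv]; exact ⟨1, Or.inl rfl, by rw [one_smul, Zgate_mul_Zgate_comm]⟩

lemma mcomm_gen_right {u : Matrix.unitaryGroup (QB m) ℂ}
    (hu : (u : Matrix (QB m) (QB m) ℂ) = Complex.I • 1 ∨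
      ∃ k : Fin m, (u : Matrix (QB m) (QB m) ℂ) = Xgate k ∨
        (u : Matrix (QB m) (QB m) ℂ) = Zgate k)
    {R : Matrix.unitaryGroup (QB m) ℂ} (hR : R ∈ pauliGroup m) :
    MComm (u : Matrix (QB m) (QB m) ℂ) (R : Matrix (QB m) (QB m) ℂ) := by
  unfold pauliGroup at hR
  induction hR using Subgroup.closure_induction with
  | mem v hv => exact MComm_gen_gen hu hv
  | one => exact MComm_one_left.symm
  | mul x y hx hy ihx ihy => exact (MComm_mul_left ihx.symm ihy.symm).symm
  | inv x hx ihx => exact (MComm_inv_left x.2 ihx.symm).symm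

lemma pauli_mcomm {P R : Matrix.unitaryGroup (QB m) ℂ}
    (hP : P ∈ pauliGroup m) (hR : R ∈ pauliGroup m) :
    MComm (P : Matrix (QB m) (QB m) ℂ) (R : Matrix (QB m) (QB m) ℂ) := by
  have hR' := hR
  unfold pauliGroup at hP
  induction hP using Subgroup.closure_induction with
  | mem u hu => exact mcomm_gen_right hu hR
  | one => exact MComm_one_left
  | mul x y hx hy ihx ihy => exact MComm_mul_left ihx ihy
  | inv x hx ihx => exact MComm_inv_left x.2 ihx


lemma coe_conj (C Q : Matrix.unitaryGroup (QB m) ℂ) :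
    ((C * Q * C⁻¹ : Matrix.unitaryGroup (QB m) ℂ) : Matrix (QB m) (QB m) ℂ) =
      (C : Matrix (QB m) (QB m) ℂ) * (Q : Matrix (QB m) (QB m) ℂ) * star (C : Matrix (QB m) (QB m) ℂ) := rfl

lemma forward_dir (C₁ C₂ : Matrix.unitaryGroup (QB m) ℂ)
    (h₂ : C₂ ∈ cliffordGroup m)
    (hex : ∃ ω : ℂ, ‖ω‖ = 1 ∧ ∃ P ∈ pauliGroup m,
        (C₁ : Matrix (QB m) (QB m) ℂ) =
          ω • ((P : Matrix (QB m) (QB m) ℂ) * (C₂ : Matrix (QB m) (QB m) ℂ))) :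
    ∀ Q ∈ pauliGroup m, ∃ α : ℂ,
        (α = 1 ∨ α = -1 ∨ α = Complex.I ∨ α = -Complex.I) ∧
        ((C₁ * Q * C₁⁻¹ : Matrix.unitaryGroup (QB m) ℂ) : Matrix (QB m) (QB m) ℂ) =
          α • ((C₂ * Q * C₂⁻¹ : Matrix.unitaryGroup (QB m) ℂ) : Matrix (QB m) (QB m) ℂ) := by
  obtain ⟨ω, hω, P, hP, hC⟩ := hex
  intro Q hQ
  have hR : C₂ * Q * C₂⁻¹ ∈ pauliGroup m := (Subgroup.mem_normalizer_iff.mp h₂ Q).mp hQ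
  obtain ⟨ε, hε, hcomm⟩ := pauli_mcomm hP hR
  refine ⟨ε, by tauto, ?_⟩
  have hPu := P.2
  have hP2 : (P : Matrix (QB m) (QB m) ℂ) * star (P : Matrix (QB m) (QB m) ℂ) = 1 := hPu.2
  have hωred : (starRingEnd ℂ) ω * ω = 1 := by
    have := Complex.normSq_eq_norm_sq ω
    have h2 : Complex.normSq ω = 1 := by
      rw [this]
      rw [hω]; norm_num
    rw [mul_comm, Complex.mul_conj, h2, Complex.ofReal_one]
  have hstar : star (ω • ((P : Matrix (QB m) (QB m) ℂ) * (C₂ : Matrix (QB m) (QB m) ℂ))) =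
      (starRingEnd ℂ) ω • (star (C₂ : Matrix (QB m) (QB m) ℂ) * star (P : Matrix (QB m) (QB m) ℂ)) := by
    rw [star_smul, star_mul]
    rfl
  rw [coe_conj, coe_conj, hC, hstar]
  set Pₘ := (P : Matrix (QB m) (QB m) ℂ)
  set C₂ₘ := (C₂ : Matrix (QB m) (QB m) ℂ)
  set Qₘ := (Q : Matrix (QB m) (QB m) ℂ)
  set Rₘ := ((C₂ * Q * C₂⁻¹ : Matrix.unitaryGroup (QB m) ℂ) : Matrix (QB m) (QB m) ℂ) with hRdef
  have hRₘ : Rₘ = C₂ₘ * Qₘ * star C₂ₘ := rfl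
  calc (ω • (Pₘ * C₂ₘ)) * Qₘ * ((starRingEnd ℂ) ω • (star C₂ₘ * star Pₘ))
      = (ω * (starRingEnd ℂ) ω) • (Pₘ * C₂ₘ * Qₘ * (star C₂ₘ * star Pₘ)) := by
        rw [Matrix.smul_mul, Matrix.smul_mul, Matrix.mul_smul, smul_smul]
    _ = Pₘ * Rₘ * star Pₘ := by
        rw [mul_comm ω, hωred, one_smul, hRₘ]
        simp only [mul_assoc]
    _ = ε • (Rₘ * Pₘ) * star Pₘ := by rw [hcomm]
    _ = ε • Rₘ := by
        rw [Matrix.smul_mul, mul_assoc, hP2, mul_one]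

lemma commute_Z_offdiag {V : Matrix (QB m) (QB m) ℂ}
    (hZ : ∀ k, V * Zgate k = Zgate k * V) {x y : QB m} (hxy : x ≠ y) :
    V x y = 0 := by
  obtain ⟨k, hk⟩ : ∃ k, x k ≠ y k := by
    by_contra h
    push_neg at h
    exact hxy (funext h)
  have h := congrFun (congrFun (hZ k) x) y
  rw [Matrix.mul_apply, Matrix.mul_apply] at h
  rw [Finset.sum_eq_single y, Finset.sum_eq_single x] at h
  · rw [Zgate_apply, Zgate_apply, if_pos rfl, if_pos rfl] at h
    have hsign : ((-1 : ℂ)) ^ ((y k).val) = -((-1 : ℂ)) ^ ((x k).val) := by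
      have hx : x k = 0 ∨ x k = 1 := zmod2_cases _
      have hy : y k = 0 ∨ y k = 1 := zmod2_cases _
      have e3 : ZMod.val (0 : ZMod 2) = 0 := rfl
      have e4 : ZMod.val (1 : ZMod 2) = 1 := rfl
      rcases hx with h1 | h1 <;> rcases hy with h2 | h2 <;>
        first
          | (exfalso; exact hk (h1.trans h2.symm))
          | (rw [h1, h2, e3, e4]; norm_num)
    rw [hsign] at h
    -- h : V x y * (-(-1)^((x k).val)) = (-1)^((x k).val) * V x y
    have hne : ((-1 : ℂ)) ^ ((x k).val) ≠ 0 := by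
      apply pow_ne_zero; norm_num
    have h0 : V x y * ((-1 : ℂ)) ^ ((x k).val) = 0 := by linear_combination (-(1:ℂ)/2) * h
    exact (mul_eq_zero.mp h0).resolve_right hne
  · intro c _ hc
    rw [Zgate_apply, if_neg (Ne.symm hc), zero_mul]
  · simp [Zgate_apply]
  · intro c _ hc
    rw [Zgate_apply, if_neg hc, mul_zero]
  · simp [Zgate_apply]

lemma commute_X_diag {V : Matrix (QB m) (QB m) ℂ}
    (hX : ∀ k, V * Xgate k = Xgate k * V) (k : Fin m) (x : QB m) :
    V x x = V (flip k x) (flip k x) := by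
  have h := congrFun (congrFun (hX k) x) (flip k x)
  rw [Matrix.mul_apply, Matrix.mul_apply] at h
  have h1 : ∑ j : QB m, V x j * Xgate k j (flip k x) = V x x := by
    rw [Finset.sum_eq_single x]
    · rw [Xgate_apply, if_pos (flip_flip k x).symm, mul_one]
    · intro c _ hc
      rw [Xgate_apply, if_neg, mul_zero]
      intro hcc
      exact hc (by rw [hcc, flip_flip])
    · intro hx; exact absurd (Finset.mem_univ x) hx
  have h2 : ∑ j : QB m, Xgate k x j * V j (flip k x) = V (flip k x) (flip k x) := by
    rw [Finset.sum_eq_single (flip k x)]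
    · rw [Xgate_apply, if_pos (flip_flip k x).symm, one_mul]
    · intro c _ hc
      rw [Xgate_apply, if_neg, zero_mul]
      intro hcc
      exact hc ((flip_eq_iff k x c).mp hcc)
    · intro hx; exact absurd (Finset.mem_univ _) hx
  rw [h1, h2] at h
  exact h

lemma diag_const {V : Matrix (QB m) (QB m) ℂ}
    (hX : ∀ k, V * Xgate k = Xgate k * V) (x : QB m) :
    V x x = V (fun _ => 0) (fun _ => 0) := by
  classical
  suffices H : ∀ s : Finset (Fin m), ∀ y : QB m, (∀ k ∉ s, y k = 0) →
      V y y = V (fun _ => 0) (fun _ => 0) by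
    exact H Finset.univ x (fun k hk => absurd (Finset.mem_univ k) hk)
  intro s
  induction s using Finset.induction_on with
  | empty =>
    intro y hy
    have : y = fun _ => 0 := funext fun k => hy k (Finset.notMem_empty k)
    rw [this]
  | insert a s' hnotmem ih =>
    intro y hy
    by_cases hya : y a = 0
    · exact ih y (fun k hk => by
        by_cases hka : k = a
        · rw [hka]; exact hya
        · exact hy k (fun hmem => hk ((Finset.mem_insert.mp hmem).resolve_left hka)))
    · have hya1 : y a = 1 := (zmod2_cases (y a)).resolve_left hya
      set y' := flip a y with hy'
      have step : V y y = V y' y' := commute_X_diag hX a y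
      have : V y' y' = V (fun _ => 0) (fun _ => 0) := by
        apply ih
        intro k hk
        by_cases hka : k = a
        · rw [hka, hy', flip_apply_self, hya1]; rfl
        · rw [hy', flip_apply_ne hka]
          exact hy k (fun hmem => hk ((Finset.mem_insert.mp hmem).resolve_left hka))
      rw [step, this]

lemma commuter_scalar {V : Matrix (QB m) (QB m) ℂ}
    (hX : ∀ k, V * Xgate k = Xgate k * V) (hZ : ∀ k, V * Zgate k = Zgate k * V) :
    V = (V (fun _ => 0) (fun _ => 0)) • 1 := by
  ext x y
  by_cases h : x = y
  · subst h
    rw [Matrix.smul_apply, Matrix.one_apply_eq, smul_eq_mul, mul_one]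
    exact diag_const hX x
  · rw [commute_Z_offdiag hZ h, Matrix.smul_apply, Matrix.one_apply_ne h, smul_eq_mul, mul_zero]

section Corr
variable {f : Fin m → Matrix.unitaryGroup (QB m) ℂ}

lemma pairwise_of_all (hcomm : ∀ j k : Fin m, Commute (f j) (f k)) (s : Finset (Fin m)) :
    (↑s : Set (Fin m)).Pairwise (Function.onFun Commute f) :=
  fun x _ y _ _ => hcomm x y

/-- Conjugation behaviour of a commuting product against a fixed matrix. -/
lemma noncommProd_mul_gate (hcomm : ∀ j k : Fin m, Commute (f j) (f k))
    (g : Matrix (QB m) (QB m) ℂ) (coef : Fin m → ℂ)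
    (hfg : ∀ k, (f k : Matrix (QB m) (QB m) ℂ) * g = coef k • (g * (f k : Matrix (QB m) (QB m) ℂ)))
    (s : Finset (Fin m)) :
    ((s.noncommProd f (pairwise_of_all hcomm s) : Matrix.unitaryGroup (QB m) ℂ) :
        Matrix (QB m) (QB m) ℂ) * g =
      (∏ k ∈ s, coef k) •
        (g * ((s.noncommProd f (pairwise_of_all hcomm s) : Matrix.unitaryGroup (QB m) ℂ) :
          Matrix (QB m) (QB m) ℂ)) := by
  classical
  induction s using Finset.induction_on with
  | empty => simp
  | insert a s' hnotmem ih =>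
    rw [Finset.noncommProd_insert_of_notMem _ _ _ _ hnotmem, Finset.prod_insert hnotmem]
    have hcoe : ((f a * s'.noncommProd f (pairwise_of_all hcomm s') :
        Matrix.unitaryGroup (QB m) ℂ) : Matrix (QB m) (QB m) ℂ) =
        (f a : Matrix (QB m) (QB m) ℂ) *
          ((s'.noncommProd f (pairwise_of_all hcomm s') : Matrix.unitaryGroup (QB m) ℂ) :
            Matrix (QB m) (QB m) ℂ) := rfl
    rw [hcoe, mul_assoc, ih, Matrix.mul_smul, ← mul_assoc, hfg a, Matrix.smul_mul,
      smul_smul, mul_comm (coef a), mul_assoc]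

end Corr

section CorrDef
variable (ε δ : Fin m → ℂ)

noncomputable def zFac : Fin m → Matrix.unitaryGroup (QB m) ℂ :=
  fun k => if ε k = 1 then 1 else uZ k

noncomputable def xFac : Fin m → Matrix.unitaryGroup (QB m) ℂ :=
  fun k => if δ k = 1 then 1 else uX k

lemma zFac_comm : ∀ j k : Fin m, Commute (zFac ε j) (zFac ε k) := by
  intro j k
  unfold zFac
  split <;> split
  · exact Commute.one_left _
  · exact Commute.one_left _
  · exact Commute.one_right _
  · exact Subtype.ext (Zgate_mul_Zgate_comm j k)

lemma xFac_comm : ∀ j k : Fin m, Commute (xFac δ j) (xFac δ k) := by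
  intro j k
  unfold xFac
  split <;> split
  · exact Commute.one_left _
  · exact Commute.one_left _
  · exact Commute.one_right _
  · exact Subtype.ext (Xgate_mul_Xgate_comm j k)

noncomputable def zCorr : Matrix.unitaryGroup (QB m) ℂ :=
  Finset.univ.noncommProd (zFac ε) (pairwise_of_all (zFac_comm ε) Finset.univ)

noncomputable def xCorr : Matrix.unitaryGroup (QB m) ℂ :=
  Finset.univ.noncommProd (xFac δ) (pairwise_of_all (xFac_comm δ) Finset.univ)

lemma zCorr_mem : zCorr ε ∈ pauliGroup m := by
  apply Subgroup.noncommProd_mem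
  intro k _
  unfold zFac
  split
  · exact one_mem _
  · exact uZ_mem k

lemma xCorr_mem : xCorr δ ∈ pauliGroup m := by
  apply Subgroup.noncommProd_mem
  intro k _
  unfold xFac
  split
  · exact one_mem _
  · exact uX_mem k

variable {ε δ}

lemma zCorr_mul_X (hε : ∀ k, ε k = 1 ∨ ε k = -1) (j : Fin m) :
    ((zCorr ε : Matrix.unitaryGroup (QB m) ℂ) : Matrix (QB m) (QB m) ℂ) * Xgate j =
      ε j • (Xgate j * ((zCorr ε : Matrix.unitaryGroup (QB m) ℂ) : Matrix (QB m) (QB m) ℂ)) := by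
  have key := noncommProd_mul_gate (zFac_comm ε) (Xgate j)
    (fun k => if k = j then ε j else 1) ?_ Finset.univ
  · rw [Finset.prod_ite_eq' Finset.univ j, if_pos (Finset.mem_univ j)] at key
    exact key
  · intro k
    beta_reduce
    unfold zFac
    by_cases hkj : k = j
    · subst hkj
      rcases hε k with h1 | h1
      · rw [if_pos h1, if_pos rfl, h1, one_smul, OneMemClass.coe_one, one_mul, mul_one]
      · rw [if_neg (by rw [h1]; norm_num), if_pos rfl, h1]
        show Zgate k * Xgate k = (-1 : ℂ) • (Xgate k * Zgate k)
        rw [neg_smul, one_smul, Xgate_Zgate_anticomm, neg_neg]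
    · rw [if_neg hkj]
      split
      · rw [one_smul, OneMemClass.coe_one, one_mul, mul_one]
      · rw [one_smul]
        show Zgate k * Xgate j = Xgate j * Zgate k
        exact (Xgate_Zgate_comm_ne j k (fun h => hkj h.symm)).symm

lemma zCorr_mul_Z (j : Fin m) :
    ((zCorr ε : Matrix.unitaryGroup (QB m) ℂ) : Matrix (QB m) (QB m) ℂ) * Zgate j =
      Zgate j * ((zCorr ε : Matrix.unitaryGroup (QB m) ℂ) : Matrix (QB m) (QB m) ℂ) := by
  have key := noncommProd_mul_gate (zFac_comm ε) (Zgate j) (fun _ => 1) ?_ Finset.univ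
  · rw [Finset.prod_const_one, one_smul] at key
    exact key
  · intro k
    rw [one_smul]
    unfold zFac
    split
    · rw [OneMemClass.coe_one, one_mul, mul_one]
    · show Zgate k * Zgate j = Zgate j * Zgate k
      exact Zgate_mul_Zgate_comm k j

lemma xCorr_mul_Z (hδ : ∀ k, δ k = 1 ∨ δ k = -1) (j : Fin m) :
    ((xCorr δ : Matrix.unitaryGroup (QB m) ℂ) : Matrix (QB m) (QB m) ℂ) * Zgate j =
      δ j • (Zgate j * ((xCorr δ : Matrix.unitaryGroup (QB m) ℂ) : Matrix (QB m) (QB m) ℂ)) := by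
  have key := noncommProd_mul_gate (xFac_comm δ) (Zgate j)
    (fun k => if k = j then δ j else 1) ?_ Finset.univ
  · rw [Finset.prod_ite_eq' Finset.univ j, if_pos (Finset.mem_univ j)] at key
    exact key
  · intro k
    beta_reduce
    unfold xFac
    by_cases hkj : k = j
    · subst hkj
      rcases hδ k with h1 | h1
      · rw [if_pos h1, if_pos rfl, h1, one_smul, OneMemClass.coe_one, one_mul, mul_one]
      · rw [if_neg (by rw [h1]; norm_num), if_pos rfl, h1]
        show Xgate k * Zgate k = (-1 : ℂ) • (Zgate k * Xgate k)
        rw [neg_smul, one_smul, Xgate_Zgate_anticomm]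
    · rw [if_neg hkj]
      split
      · rw [one_smul, OneMemClass.coe_one, one_mul, mul_one]
      · rw [one_smul]
        show Xgate k * Zgate j = Zgate j * Xgate k
        exact Xgate_Zgate_comm_ne k j hkj

lemma xCorr_mul_X (j : Fin m) :
    ((xCorr δ : Matrix.unitaryGroup (QB m) ℂ) : Matrix (QB m) (QB m) ℂ) * Xgate j =
      Xgate j * ((xCorr δ : Matrix.unitaryGroup (QB m) ℂ) : Matrix (QB m) (QB m) ℂ) := by
  have key := noncommProd_mul_gate (xFac_comm δ) (Xgate j) (fun _ => 1) ?_ Finset.univ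
  · rw [Finset.prod_const_one, one_smul] at key
    exact key
  · intro k
    rw [one_smul]
    unfold xFac
    split
    · rw [OneMemClass.coe_one, one_mul, mul_one]
    · show Xgate k * Xgate j = Xgate j * Xgate k
      exact Xgate_mul_Xgate_comm k j

end CorrDef

lemma star_conj_eq {A B : Matrix (QB m) (QB m) ℂ} (hA : A ∈ Matrix.unitaryGroup (QB m) ℂ)
    {ε : ℂ} (hee : ε * ε = 1) (h : A * B = ε • (B * A)) :
    star A * B = ε • (B * star A) := by
  have h1 : star A * A = 1 := hA.1
  have h2 : A * star A = 1 := hA.2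
  have key : B * star A = ε • (star A * B) := by
    calc B * star A = star A * (A * B) * star A := by
          rw [← mul_assoc, h1, one_mul]
    _ = star A * (ε • (B * A)) * star A := by rw [h]
    _ = ε • (star A * B * (A * star A)) := by
          rw [Matrix.mul_smul, Matrix.smul_mul, mul_assoc, mul_assoc, mul_assoc]
    _ = ε • (star A * B) := by rw [h2, mul_one]
  rw [key, smul_smul, hee, one_smul]

lemma backward_dir (C₁ C₂ : Matrix.unitaryGroup (QB m) ℂ)
    (h₂ : C₂ ∈ cliffordGroup m)
    (h : ∀ Q ∈ pauliGroup m, ∃ α : ℂ,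
        (α = 1 ∨ α = -1 ∨ α = Complex.I ∨ α = -Complex.I) ∧
        ((C₁ * Q * C₁⁻¹ : Matrix.unitaryGroup (QB m) ℂ) : Matrix (QB m) (QB m) ℂ) =
          α • ((C₂ * Q * C₂⁻¹ : Matrix.unitaryGroup (QB m) ℂ) : Matrix (QB m) (QB m) ℂ)) :
    ∃ ω : ℂ, ‖ω‖ = 1 ∧ ∃ P ∈ pauliGroup m,
        (C₁ : Matrix (QB m) (QB m) ℂ) =
          ω • ((P : Matrix (QB m) (QB m) ℂ) * (C₂ : Matrix (QB m) (QB m) ℂ)) := by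
  classical
  set U : Matrix.unitaryGroup (QB m) ℂ := C₁ * C₂⁻¹ with hU
  have hC₂inv : C₂⁻¹ ∈ cliffordGroup m := inv_mem h₂
  set x₀ : QB m := fun _ => 0 with hx₀
  have main : ∀ (u : Matrix.unitaryGroup (QB m) ℂ), u ∈ pauliGroup m →
      (u : Matrix (QB m) (QB m) ℂ) * (u : Matrix (QB m) (QB m) ℂ) = 1 →
      ∃ α : ℂ, (α = 1 ∨ α = -1) ∧
        (U : Matrix (QB m) (QB m) ℂ) * (u : Matrix (QB m) (QB m) ℂ) =
          α • ((u : Matrix (QB m) (QB m) ℂ) * (U : Matrix (QB m) (QB m) ℂ)) := by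
    intro u hu husq
    have hQ : C₂⁻¹ * u * C₂ ∈ pauliGroup m := by
      have := (Subgroup.mem_normalizer_iff.mp hC₂inv u).mp hu
      rwa [inv_inv] at this
    obtain ⟨α, _, hα⟩ := h _ hQ
    have e₂ : C₂ * (C₂⁻¹ * u * C₂) * C₂⁻¹ = u := by group
    have e₁ : C₁ * (C₂⁻¹ * u * C₂) * C₁⁻¹ = U * u * U⁻¹ := by rw [hU]; group
    rw [e₁, e₂] at hα
    have husq' : u * u = 1 := Subtype.ext husq
    have hsq : (U * u * U⁻¹) * (U * u * U⁻¹) = 1 := by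
      have : (U * u * U⁻¹) * (U * u * U⁻¹) = U * (u * u) * U⁻¹ := by group
      rw [this, husq', mul_one, mul_inv_cancel]
    have hαsq : α * α = 1 := by
      have h1 : ((1 : Matrix.unitaryGroup (QB m) ℂ) : Matrix (QB m) (QB m) ℂ) =
          (α • (u : Matrix (QB m) (QB m) ℂ)) * (α • (u : Matrix (QB m) (QB m) ℂ)) := by
        rw [← hα, ← hsq]; rfl
      rw [Matrix.smul_mul, Matrix.mul_smul, smul_smul, husq] at h1
      have h2 := congrFun (congrFun h1 x₀) x₀
      rw [Matrix.smul_apply, OneMemClass.coe_one, Matrix.one_apply_eq, smul_eq_mul, mul_one] at h2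
      exact h2.symm
    refine ⟨α, mul_self_eq_one_iff.mp hαsq, ?_⟩
    have hcoe : ((U * u * U⁻¹ : Matrix.unitaryGroup (QB m) ℂ) : Matrix (QB m) (QB m) ℂ) =
        (U : Matrix (QB m) (QB m) ℂ) * (u : Matrix (QB m) (QB m) ℂ) *
          star (U : Matrix (QB m) (QB m) ℂ) := rfl
    rw [hcoe] at hα
    have := congrArg (fun M => M * (U : Matrix (QB m) (QB m) ℂ)) hα
    rw [mul_assoc, mul_assoc] at this
    rw [show star (U : Matrix (QB m) (QB m) ℂ) * (U : Matrix (QB m) (QB m) ℂ) = 1 from U.2.1,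
      mul_one, Matrix.smul_mul] at this
    exact this
  have hXstep : ∀ k : Fin m, ∃ α : ℂ, (α = 1 ∨ α = -1) ∧
      (U : Matrix (QB m) (QB m) ℂ) * Xgate k = α • (Xgate k * (U : Matrix (QB m) (QB m) ℂ)) :=
    fun k => main (uX k) (uX_mem k) (Xgate_mul_Xgate k)
  have hZstep : ∀ k : Fin m, ∃ α : ℂ, (α = 1 ∨ α = -1) ∧
      (U : Matrix (QB m) (QB m) ℂ) * Zgate k = α • (Zgate k * (U : Matrix (QB m) (QB m) ℂ)) :=
    fun k => main (uZ k) (uZ_mem k) (Zgate_mul_Zgate k)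
  choose εf hεf1 hεf2 using hXstep
  choose δf hδf1 hδf2 using hZstep
  set P : Matrix.unitaryGroup (QB m) ℂ := zCorr εf * xCorr δf with hP
  have hPmem : P ∈ pauliGroup m := mul_mem (zCorr_mem εf) (xCorr_mem δf)
  set Pₘ := (P : Matrix (QB m) (QB m) ℂ) with hPₘ
  set Uₘ := (U : Matrix (QB m) (QB m) ℂ) with hUₘ
  have hPcoe : Pₘ = ((zCorr εf : Matrix.unitaryGroup (QB m) ℂ) : Matrix (QB m) (QB m) ℂ) *
      ((xCorr δf : Matrix.unitaryGroup (QB m) ℂ) : Matrix (QB m) (QB m) ℂ) := rfl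
  have hPX : ∀ j, Pₘ * Xgate j = εf j • (Xgate j * Pₘ) := by
    intro j
    rw [hPcoe, mul_assoc, xCorr_mul_X, ← mul_assoc, zCorr_mul_X hεf1, Matrix.smul_mul, mul_assoc]
  have hPZ : ∀ j, Pₘ * Zgate j = δf j • (Zgate j * Pₘ) := by
    intro j
    rw [hPcoe, mul_assoc, xCorr_mul_Z hδf1, Matrix.mul_smul, ← mul_assoc, zCorr_mul_Z,
      mul_assoc]
  set V : Matrix (QB m) (QB m) ℂ := star Pₘ * Uₘ with hV
  have hesq : ∀ j, εf j * εf j = 1 := by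
    intro j; rcases hεf1 j with h' | h' <;> rw [h'] <;> ring
  have hdsq : ∀ j, δf j * δf j = 1 := by
    intro j; rcases hδf1 j with h' | h' <;> rw [h'] <;> ring
  have hVX : ∀ j, V * Xgate j = Xgate j * V := by
    intro j
    calc V * Xgate j = star Pₘ * (Uₘ * Xgate j) := by rw [hV, mul_assoc]
    _ = εf j • (star Pₘ * Xgate j * Uₘ) := by
        rw [hεf2 j, Matrix.mul_smul, mul_assoc]
    _ = εf j • ((εf j • (Xgate j * star Pₘ)) * Uₘ) := by
        rw [star_conj_eq P.2 (hesq j) (hPX j)]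
    _ = Xgate j * V := by
        rw [Matrix.smul_mul, smul_smul, hesq j, one_smul, hV, mul_assoc]
  have hVZ : ∀ j, V * Zgate j = Zgate j * V := by
    intro j
    calc V * Zgate j = star Pₘ * (Uₘ * Zgate j) := by rw [hV, mul_assoc]
    _ = δf j • (star Pₘ * Zgate j * Uₘ) := by
        rw [hδf2 j, Matrix.mul_smul, mul_assoc]
    _ = δf j • ((δf j • (Zgate j * star Pₘ)) * Uₘ) := by
        rw [star_conj_eq P.2 (hdsq j) (hPZ j)]
    _ = Zgate j * V := by
        rw [Matrix.smul_mul, smul_smul, hdsq j, one_smul, hV, mul_assoc]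
  set c : ℂ := V x₀ x₀ with hc
  have hVscalar : V = c • 1 := commuter_scalar hVX hVZ
  have hW : V = ((P⁻¹ * U : Matrix.unitaryGroup (QB m) ℂ) : Matrix (QB m) (QB m) ℂ) := rfl
  have hVunit : star V * V = 1 := by rw [hW]; exact (P⁻¹ * U).2.1
  have hcc : star c * c = 1 := by
    rw [hVscalar, star_smul, star_one] at hVunit
    have h3 : (star c * c) • (1 : Matrix (QB m) (QB m) ℂ) = 1 := by
      calc (star c * c) • (1 : Matrix (QB m) (QB m) ℂ)
          = (star c • (1 : Matrix (QB m) (QB m) ℂ)) * (c • 1) := by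
            rw [Matrix.smul_mul, Matrix.mul_smul, one_mul, smul_smul]
      _ = 1 := hVunit
    have h2 := congrFun (congrFun h3 x₀) x₀
    rwa [Matrix.smul_apply, Matrix.one_apply_eq, smul_eq_mul, mul_one] at h2
  have hnorm : ‖c‖ = 1 := by
    have hsq : Complex.normSq c = 1 := by
      rw [Complex.star_def, mul_comm, Complex.mul_conj] at hcc
      exact_mod_cast hcc
    rw [Complex.norm_def, hsq, Real.sqrt_one]
  refine ⟨c, hnorm, P, hPmem, ?_⟩
  have hUeq : Uₘ = c • Pₘ := by
    calc Uₘ = Pₘ * (star Pₘ * Uₘ) := by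
          rw [← mul_assoc, show Pₘ * star Pₘ = 1 from P.2.2, one_mul]
    _ = Pₘ * (c • 1) := by rw [← hV, hVscalar]
    _ = c • Pₘ := by rw [Matrix.mul_smul, mul_one]
  have hC₁ : C₁ = U * C₂ := by rw [hU]; group
  calc (C₁ : Matrix (QB m) (QB m) ℂ) = Uₘ * (C₂ : Matrix (QB m) (QB m) ℂ) := by rw [hC₁]; rfl
  _ = c • (Pₘ * (C₂ : Matrix (QB m) (QB m) ℂ)) := by rw [hUeq, Matrix.smul_mul]

/-- Two Clifford operations `C₁, C₂` agree up to a global phase and a Pauli correction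
if and only if they induce the same conjugation action on every Pauli operation up to a
phase in `{1, −1, i, −i}`. -/
theorem stmt_3 (m : ℕ) (hm : 1 ≤ m) (C₁ C₂ : Matrix.unitaryGroup (QB m) ℂ)
    (h₁ : C₁ ∈ cliffordGroup m) (h₂ : C₂ ∈ cliffordGroup m) :
    (∃ ω : ℂ, ‖ω‖ = 1 ∧ ∃ P ∈ pauliGroup m,
        (C₁ : Matrix (QB m) (QB m) ℂ) =
          ω • ((P : Matrix (QB m) (QB m) ℂ) * (C₂ : Matrix (QB m) (QB m) ℂ))) ↔
    (∀ Q ∈ pauliGroup m, ∃ α : ℂ,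
        (α = 1 ∨ α = -1 ∨ α = Complex.I ∨ α = -Complex.I) ∧
        ((C₁ * Q * C₁⁻¹ : Matrix.unitaryGroup (QB m) ℂ) : Matrix (QB m) (QB m) ℂ) =
          α • ((C₂ * Q * C₂⁻¹ : Matrix.unitaryGroup (QB m) ℂ) : Matrix (QB m) (QB m) ℂ)) := by
  exact ⟨forward_dir C₁ C₂ h₂, backward_dir C₁ C₂ h₂⟩

end Stmt3
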